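/- Let G be a connected unweighted simple graph, let α ≥ 1, β ≥ 0 and σ be integers with α + β ≤ σ, and let S be an (α,β)-spanner of G. Let R be a spanning subgraph of G with S ⊆ R ⊆ G such that for every edge e = (u,v) of S with frag_S(e) > σ that is not a bridge of G, R contains the edges of some shortest path between u and v in G∖e. Then R is an (α,β)-spanner of G, and R is σ-resilient: for every edge e = (u,v) of R, dist_{R∖e}(u,v) ≤ max{σ, dist_{G∖e}(u,v)} (with values in ℕ∞). -/

import Mathlib

open SimpleGraph

private lemma deleteEdges_mono' {V : Type*} {S R : SimpleGraph V} (h : S ≤ R)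
    (s : Set (Sym2 V)) : S.deleteEdges s ≤ R.deleteEdges s := by
  intro a b hab
  simp only [deleteEdges, SimpleGraph.sdiff_adj] at hab ⊢
  exact ⟨h hab.1, hab.2⟩

/-- Let `S` be an `(α,β)`-spanner of a connected graph `G` with
`α + β ≤ σ`, and let `R` with `S ⊆ R ⊆ G` contain, for every edge `e = (u,v)` of `S`
with `frag_S(e) > σ` that is not a bridge of `G`, the edges of some shortest path
between `u` and `v` in `G∖e`. Then `R` is an `(α,β)`-spanner of `G` and `R` is
`σ`-resilient: for every edge `e = (u,v)` of `R`,
`dist_{R∖e}(u,v) ≤ max {σ, dist_{G∖e}(u,v)}`. -/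
theorem stmt_3 {V : Type*} (G S R : SimpleGraph V) (hG : G.Connected)
    (α β σ : ℕ) (hα : 1 ≤ α) (hσ : α + β ≤ σ)
    (hSR : S ≤ R) (hRG : R ≤ G)
    (hspan : ∀ x y : V, S.edist x y ≤ (α : ℕ∞) * G.edist x y + (β : ℕ∞))
    (hbackup : ∀ u v : V, S.Adj u v →
      (σ : ℕ∞) < (S.deleteEdges {s(u,v)}).edist u v →
      ¬ G.IsBridge s(u,v) →
      ∃ p : (G.deleteEdges {s(u,v)}).Walk u v,
        (p.length : ℕ∞) = (G.deleteEdges {s(u,v)}).edist u v ∧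
        ∀ f ∈ p.edges, f ∈ R.edgeSet) :
    (∀ x y : V, R.edist x y ≤ (α : ℕ∞) * G.edist x y + (β : ℕ∞)) ∧
    (∀ u v : V, R.Adj u v →
      (R.deleteEdges {s(u,v)}).edist u v ≤
        max (σ : ℕ∞) ((G.deleteEdges {s(u,v)}).edist u v)) := by
  constructor
  · intro x y
    exact le_trans (edist_anti hSR) (hspan x y)
  · intro u v huv
    by_cases hbr : G.IsBridge s(u,v)
    · -- bridge: G∖e distance is ⊤
      have hnr : ¬ (G.deleteEdges {s(u,v)}).Reachable u v := (isBridge_iff.mp hbr)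
      have : (G.deleteEdges {s(u,v)}).edist u v = ⊤ := edist_eq_top_of_not_reachable hnr
      rw [this]
      exact le_trans le_top (le_max_right _ _)
    · by_cases hS : S.Adj u v
      · rcases le_or_gt ((S.deleteEdges {s(u,v)}).edist u v) (σ : ℕ∞) with hle | hgt
        · exact le_trans (le_trans (edist_anti (deleteEdges_mono' hSR _)) hle) (le_max_left _ _)
        · obtain ⟨p, hplen, hpR⟩ := hbackup u v hS hgt hbr
          have hsub : ∀ f ∈ p.edges, f ∈ (R.deleteEdges {s(u,v)}).edgeSet := by
            intro f hf
            rw [edgeSet_deleteEdges]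
            refine ⟨hpR f hf, ?_⟩
            have := p.edges_subset_edgeSet hf
            rw [edgeSet_deleteEdges] at this
            exact this.2
          have := edist_le (p.transfer (R.deleteEdges {s(u,v)}) hsub)
          rw [Walk.length_transfer, hplen] at this
          exact le_trans this (le_max_right _ _)
      · -- e not in S, so S∖e = S and S-distance is small
        have hSe : S.deleteEdges {s(u,v)} = S := by
          rw [deleteEdges_eq_self]
          simp only [Set.disjoint_singleton_right]
          intro h
          exact hS ((mem_edgeSet S).mp h)
        have hG1 : G.edist u v = 1 := edist_eq_one_iff_adj.mpr (hRG huv)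
        have hSd : S.edist u v ≤ (σ : ℕ∞) := by
          calc S.edist u v ≤ (α : ℕ∞) * G.edist u v + (β : ℕ∞) := hspan u v
            _ = (α : ℕ∞) + (β : ℕ∞) := by rw [hG1, mul_one]
            _ = ((α + β : ℕ) : ℕ∞) := by push_cast; ring
            _ ≤ (σ : ℕ∞) := by exact_mod_cast hσ
        calc (R.deleteEdges {s(u,v)}).edist u v
            ≤ (S.deleteEdges {s(u,v)}).edist u v := edist_anti (deleteEdges_mono' hSR _)
          _ = S.edist u v := by rw [hSe]
          _ ≤ (σ : ℕ∞) := hSd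
          _ ≤ _ := le_max_left _ _
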